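/- The property of being anti-Eulerian (every vertex has odd degree) is preserved by local complementation: if G is a simple graph in which every vertex has odd degree, then for any vertex v, every vertex of G*v also has odd degree. -/

import Mathlib

/-- Local complementation at a vertex `v`: toggle all edges between
distinct neighbours of `v`. -/
def localComp {V : Type} (G : SimpleGraph V) (v : V) : SimpleGraph V where
  Adj x y := x ≠ y ∧ Xor (G.Adj x y) (G.Adj v x ∧ G.Adj v y)
  symm := ⟨by
    intro x y ⟨hxy, h⟩
    refine ⟨hxy.symm, ?_⟩
    rw [G.adj_comm y x, and_comm]
    exact h⟩
  loopless := ⟨fun x h => h.1 rfl⟩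

/-- Edge local complementation on the edge `{u,v}`: `G*u*v*u`. -/
def elc {V : Type} (G : SimpleGraph V) (u v : V) : SimpleGraph V :=
  localComp (localComp (localComp G u) v) u

instance {V : Type} [DecidableEq V] (G : SimpleGraph V) [DecidableRel G.Adj] (v : V) :
    DecidableRel (localComp G v).Adj := fun x y =>
  inferInstanceAs (Decidable (x ≠ y ∧ Xor (G.Adj x y) (G.Adj v x ∧ G.Adj v y)))

lemma odd_iff_zmod (n : ℕ) : Odd n ↔ (n : ZMod 2) = 1 := by
  rw [Nat.odd_iff, ← ZMod.natCast_mod n 2]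
  rcases Nat.mod_two_eq_zero_or_one n with h | h <;> simp [h] <;> decide

lemma deg_zmod {V : Type} [Fintype V] [DecidableEq V] (G : SimpleGraph V)
    [DecidableRel G.Adj] (w : V) :
    (G.degree w : ZMod 2) = ∑ y : V, if G.Adj w y then 1 else 0 := by
  rw [SimpleGraph.degree, SimpleGraph.neighborFinset_eq_filter, Finset.card_filter]
  push_cast
  simp

/-- The anti-Eulerian property (all vertex degrees odd) is preserved by
local complementation. -/
theorem localComp_preserves_antiEulerian {V : Type} [Fintype V] [DecidableEq V]
    (G : SimpleGraph V) [DecidableRel G.Adj] (v : V)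
    (h : ∀ w : V, Odd (G.degree w)) :
    ∀ w : V, Odd ((localComp G v).degree w) := by
  intro w
  rw [odd_iff_zmod, deg_zmod]
  by_cases hvw : G.Adj v w
  · have key : ∀ y : V, (if (localComp G v).Adj w y then (1 : ZMod 2) else 0) =
        (if G.Adj w y then 1 else 0) + (if G.Adj v y then 1 else 0) +
        (if y = w then 1 else 0) := by
      intro y
      by_cases hy : y = w
      · subst hy
        simp [localComp, hvw, G.irrefl]
        decide
      · by_cases ha : G.Adj w y <;> by_cases hb : G.Adj v y <;>
          simp [localComp, Xor', hvw, hy, Ne.symm hy, ha, hb] <;> decide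
    rw [Finset.sum_congr rfl (fun y _ => key y)]
    rw [Finset.sum_add_distrib, Finset.sum_add_distrib]
    rw [← deg_zmod, ← deg_zmod]
    have h1 := (odd_iff_zmod _).mp (h w)
    have h2 := (odd_iff_zmod _).mp (h v)
    rw [h1, h2]
    simp
    decide
  · have key : ∀ y : V, (if (localComp G v).Adj w y then (1 : ZMod 2) else 0) =
        (if G.Adj w y then 1 else 0) := by
      intro y
      by_cases ha : G.Adj w y
      · simp [localComp, Xor', hvw, ha, G.ne_of_adj ha]
      · simp [localComp, Xor', hvw, ha]
    rw [Finset.sum_congr rfl (fun y _ => key y), ← deg_zmod]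
    exact (odd_iff_zmod _).mp (h w)
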